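/- For fixed q, t, b and all n ≥ 2bt, the number of vectors in Σ_q^n expressible as at most t disjoint b≤-bursts satisfies (1−1/q)^t (q^b−1)^t C(n−(2b−2)t, t) ≤ |B_{≤t,≤b}| ≤ (t+1)(q^b−1)^t C(n, t). -/

import Mathlib

open scoped BigOperators

/-- The cyclic interval of length `L` starting at position `i` in `ZMod n`. -/
def cycInt (n : ℕ) (i : ZMod n) (L : ℕ) : Set (ZMod n) :=
  {j | ∃ k : ℕ, k < L ∧ j = i + (k : ZMod n)}

/-- `e` is a burst supported in the cyclic interval starting at `i` of length `L ≤ b`. -/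
def BurstAt {G : Type*} [AddCommGroup G] {n : ℕ} (b : ℕ) (e : ZMod n → G)
    (i : ZMod n) (L : ℕ) : Prop :=
  L ≤ b ∧ ∀ j : ZMod n, e j ≠ 0 → j ∈ cycInt n i L

/-- `e` is a `b≤`-burst: its support lies in a cyclic interval of length at most `b`. -/
def IsBurst {G : Type*} [AddCommGroup G] {n : ℕ} (b : ℕ) (e : ZMod n → G) : Prop :=
  ∃ i L, BurstAt b e i L

/-- `w` is a sum of exactly `t` many `b≤`-bursts. -/
def SumOfBursts {G : Type*} [AddCommGroup G] {n : ℕ} (b t : ℕ) (w : ZMod n → G) : Prop :=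
  ∃ l : List (ZMod n → G), l.length = t ∧ (∀ e ∈ l, IsBurst b e) ∧ l.sum = w

/-- The cyclic burst distance: minimum number of `b≤`-bursts summing to `x - y`. -/
noncomputable def burstDist {G : Type*} [AddCommGroup G] {n : ℕ} (b : ℕ)
    (x y : ZMod n → G) : ℕ :=
  sInf {t | SumOfBursts b t (x - y)}

/-- `w` is a sum of exactly `t` pairwise disjoint `b≤`-bursts (disjoint covering intervals). -/
def SumOfDisjointBursts {G : Type*} [AddCommGroup G] {n : ℕ} (b t : ℕ)
    (w : ZMod n → G) : Prop :=
  ∃ (es : Fin t → ZMod n → G) (ps : Fin t → ZMod n) (Ls : Fin t → ℕ),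
    (∀ m, BurstAt b (es m) (ps m) (Ls m)) ∧
    (∀ m m' : Fin t, m ≠ m' → cycInt n (ps m) (Ls m) ∩ cycInt n (ps m') (Ls m') = ∅) ∧
    ∑ m, es m = w

/-- `B_{≤t,≤b}`: vectors expressible as a sum of at most `t` pairwise disjoint `b≤`-bursts. -/
def BSet (n b t : ℕ) (G : Type*) [AddCommGroup G] : Set (ZMod n → G) :=
  {w | ∃ i ≤ t, SumOfDisjointBursts b i w}

/-- The radius-`t` burst ball around `x`. -/
def burstBall {G : Type*} [AddCommGroup G] {n : ℕ} (b t : ℕ) (x : ZMod n → G) :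
    Set (ZMod n → G) :=
  {y | burstDist b x y ≤ t}

/-- A `(t,b)`-burst-correcting code: radius-`t` burst balls around distinct codewords
are disjoint. -/
def IsBurstCorrecting {G : Type*} [AddCommGroup G] {n : ℕ} (t b : ℕ)
    (C : Set (ZMod n → G)) : Prop :=
  ∀ u ∈ C, ∀ v ∈ C, u ≠ v → burstBall b t u ∩ burstBall b t v = ∅


open Finset

section Expand
variable {G : Type*} [AddCommGroup G] {n b : ℕ}

/-- the burst at `p` with content `v`. -/
noncomputable def expand (p : ZMod n) (v : Fin b → G) : ZMod n → G :=
  fun j => ∑ k : Fin b, if j = p + ((k : ℕ) : ZMod n) then v k else 0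

lemma natCast_zmod_inj (hn : 0 < n) {x y : ℕ} (hx : x < n) (hy : y < n)
    (h : (x : ZMod n) = y) : x = y := by
  haveI : NeZero n := ⟨hn.ne'⟩
  have := congrArg ZMod.val h
  rwa [ZMod.val_natCast_of_lt hx, ZMod.val_natCast_of_lt hy] at this

lemma expand_apply (hbn : b ≤ n) (p : ZMod n) (v : Fin b → G) (k : Fin b) :
    expand p v (p + ((k : ℕ) : ZMod n)) = v k := by
  rw [expand, Finset.sum_eq_single k]
  · simp
  · intro k' _ hk'
    rw [if_neg]
    intro h
    have h2 : ((k:ℕ) : ZMod n) = ((k':ℕ) : ZMod n) := add_left_cancel h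
    exact hk' (Fin.ext (natCast_zmod_inj (lt_of_le_of_lt (Nat.zero_le _) (Nat.lt_of_lt_of_le k.2 hbn)) (Nat.lt_of_lt_of_le k'.2 hbn) (Nat.lt_of_lt_of_le k.2 hbn) h2.symm))
  · simp

lemma cycInt_mono {i : ZMod n} {L L' : ℕ} (h : L ≤ L') : cycInt n i L ⊆ cycInt n i L' :=
  fun _ ⟨k, hk, hj⟩ => ⟨k, lt_of_lt_of_le hk h, hj⟩

lemma expand_support (p : ZMod n) (v : Fin b → G) (j : ZMod n) (h : expand p v j ≠ 0) :
    j ∈ cycInt n p b := by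
  by_contra hj
  apply h
  rw [expand]
  apply Finset.sum_eq_zero
  intro k _
  rw [if_neg]
  intro hk
  exact hj ⟨k, k.2, hk⟩

lemma burstAt_expand (p : ZMod n) (v : Fin b → G) : BurstAt b (expand p v) p b :=
  ⟨le_refl b, fun j h => expand_support p v j h⟩

lemma eq_expand (hbn : b ≤ n) (p : ZMod n) (e : ZMod n → G)
    (he : ∀ j, e j ≠ 0 → j ∈ cycInt n p b) :
    e = expand p (fun k : Fin b => e (p + ((k : ℕ) : ZMod n))) := by
  funext j
  by_cases hj : ∃ k : Fin b, j = p + ((k:ℕ) : ZMod n)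
  · obtain ⟨k, rfl⟩ := hj
    rw [expand_apply hbn]
  · rw [expand]
    rw [Finset.sum_eq_zero (fun k _ => if_neg (fun h => hj ⟨k, h⟩))]
    by_contra h0
    obtain ⟨k, hk, hjk⟩ := he j h0
    exact hj ⟨⟨k, hk⟩, hjk⟩

lemma expand_sum {ι : Type*} (s : Finset ι) (p : ZMod n) (v : ι → Fin b → G) (j : ZMod n) :
    expand p (∑ m ∈ s, v m) j = ∑ m ∈ s, expand p (v m) j := by
  unfold expand
  rw [Finset.sum_comm]
  apply Finset.sum_congr rfl
  intro k _
  by_cases h : j = p + ((k:ℕ) : ZMod n) <;> simp [h]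

end Expand

open scoped Classical in
noncomputable def decode {G : Type*} [AddCommGroup G] {n b : ℕ} [NeZero n]
    (F : ZMod n → Fin b → G) : ZMod n → G :=
  fun j => ∑ p : ZMod n, expand p (F p) j

section Upper
open scoped Classical
variable {G : Type*} [AddCommGroup G] {n b : ℕ} [NeZero n]

lemma exists_encoding (hbn : b ≤ n) {i : ℕ} {w : ZMod n → G}
    (hw : SumOfDisjointBursts b i w) :
    ∃ F : ZMod n → Fin b → G,
      (Finset.univ.filter (fun p => F p ≠ 0)).card ≤ i ∧ decode F = w := by
  obtain ⟨es, ps, Ls, hburst, hdisj, hsum⟩ := hw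
  set slice : Fin i → Fin b → G := fun m k => es m (ps m + ((k:ℕ) : ZMod n)) with hslice
  refine ⟨fun p => ∑ m ∈ Finset.univ.filter (fun m => ps m = p), slice m, ?_, ?_⟩
  · apply le_trans (Finset.card_le_card (t := Finset.univ.image ps) ?_)
            (le_trans Finset.card_image_le (by simp))
    intro p hp
    simp only [Finset.mem_filter, Finset.mem_univ, true_and] at hp
    by_contra hi
    apply hp
    rw [Finset.filter_false_of_mem, Finset.sum_empty]
    intro m _ hm
    exact hi (Finset.mem_image.2 ⟨m, Finset.mem_univ m, hm⟩)
  · funext j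
    rw [decode]
    have key : ∀ m : Fin i, es m = expand (ps m) (slice m) := by
      intro m
      exact eq_expand hbn (ps m) (es m)
        (fun j hj => cycInt_mono (hburst m).1 ((hburst m).2 j hj))
    calc (∑ p : ZMod n, expand p (∑ m ∈ Finset.univ.filter (fun m => ps m = p), slice m) j)
        = ∑ p : ZMod n, ∑ m ∈ Finset.univ.filter (fun m => ps m = p),
            expand (ps m) (slice m) j := by
          refine Finset.sum_congr rfl (fun p _ => ?_)
          rw [expand_sum]
          refine Finset.sum_congr rfl (fun m hm => ?_)
          rw [(Finset.mem_filter.1 hm).2]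
      _ = ∑ m : Fin i, expand (ps m) (slice m) j :=
          Finset.sum_fiberwise_of_maps_to (fun m _ => Finset.mem_univ (ps m)) _
      _ = w j := by
          rw [← hsum]
          simp only [← key]
          rw [Finset.sum_apply]

end Upper

section Count
open scoped Classical
open Finset

lemma choose_le_choose_of_le_half {N i j : ℕ} (hij : i ≤ j) (hj : 2 * j ≤ N) :
    N.choose i ≤ N.choose j := by
  induction j with
  | zero => simp_all
  | succ j ih =>
    rcases Nat.lt_or_ge i (j+1) with h | h
    · refine le_trans (ih (by omega) (by omega)) (Nat.choose_le_succ_of_lt_half_left ?_)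
      have : j + 1 ≤ N / 2 := (Nat.le_div_iff_mul_le (by norm_num)).2 (by omega)
      omega
    · have : i = j + 1 := le_antisymm hij h
      subst this; rfl

lemma card_bounded_support {α β : Type*} [Fintype α] [Fintype β] [Zero β] (t : ℕ)
    (ht : 2 * t ≤ Fintype.card α) (hβ : 2 ≤ Fintype.card β) :
    (Finset.univ.filter (fun F : α → β => (Finset.univ.filter (fun x => F x ≠ 0)).card ≤ t)).card
      ≤ (t + 1) * (Fintype.card α).choose t * (Fintype.card β - 1) ^ t := by
  obtain ⟨v1, hv1⟩ := Fintype.exists_ne_of_one_lt_card (by omega) (0 : β)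
  have hcard1 : Fintype.card {v : β // v ≠ 0} = Fintype.card β - 1 := by
    rw [Fintype.card_subtype_compl, Fintype.card_subtype_eq]
  set supp : (α → β) → Finset α := fun F => Finset.univ.filter (fun x => F x ≠ 0) with hsupp
  set A := Finset.univ.filter (fun F : α → β => (supp F).card ≤ t) with hA
  set B := Finset.univ.filter (fun s : Finset α => s.card ≤ t) with hB
  have h1 : A.card = ∑ s ∈ B, (A.filter (fun F => supp F = s)).card :=
    Finset.card_eq_sum_card_fiberwise (fun F hF => by
      simp only [hB, Finset.mem_coe, mem_filter, mem_univ, true_and]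
      exact (Finset.mem_filter.1 hF).2)
  have h2 : ∀ s ∈ B, (A.filter (fun F => supp F = s)).card ≤ (Fintype.card β - 1) ^ s.card := by
    intro s _
    have key : ∀ F ∈ A.filter (fun F => supp F = s), ∀ x : α, x ∈ s ↔ F x ≠ 0 := by
      intro F hF x
      have := (Finset.mem_filter.1 hF).2
      rw [← this]
      simp [hsupp]
    have : (A.filter (fun F => supp F = s)).card ≤
        (Finset.univ : Finset ((x : s) → {v : β // v ≠ 0})).card := by
      apply Finset.card_le_card_of_injOn
        (fun F => fun x => if h : F x.1 ≠ 0 then ⟨F x.1, h⟩ else ⟨v1, hv1⟩)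
        (fun _ _ => Finset.mem_univ _)
      intro F hF F' hF' hFF'
      funext x
      by_cases hx : x ∈ s
      · have h1x : F x ≠ 0 := (key F hF x).1 hx
        have h2x : F' x ≠ 0 := (key F' hF' x).1 hx
        have := congrFun hFF' ⟨x, hx⟩
        simp only [dif_pos h1x, dif_pos h2x] at this
        exact congrArg Subtype.val this
      · have h1x : F x = 0 := by by_contra h; exact hx ((key F hF x).2 h)
        have h2x : F' x = 0 := by by_contra h; exact hx ((key F' hF' x).2 h)
        rw [h1x, h2x]
    refine le_trans this ?_
    rw [Finset.card_univ, Fintype.card_pi]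
    simp [hcard1]
  have h3 : A.card ≤ B.card * (Fintype.card β - 1) ^ t := by
    rw [h1]
    refine le_trans (Finset.sum_le_sum (fun s hs => le_trans (h2 s hs) ?_))
      (by rw [Finset.sum_const, smul_eq_mul])
    exact Nat.pow_le_pow_right (by omega) (by
      have := (Finset.mem_filter.1 hs).2
      exact this)
  have h4 : B.card ≤ (t + 1) * (Fintype.card α).choose t := by
    have hBsum : B.card = ∑ i ∈ Finset.range (t+1), (B.filter (fun s => s.card = i)).card :=
      Finset.card_eq_sum_card_fiberwise (fun s hs => Finset.mem_range.2
        (Nat.lt_succ_of_le (Finset.mem_filter.1 hs).2))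
    rw [hBsum]
    refine le_trans (Finset.sum_le_sum
      (g := fun _ => (Fintype.card α).choose t) (fun i hi => ?_)) ?_
    · refine le_trans (le_trans (Finset.card_le_card (fun s hs => ?_))
        (le_of_eq (Finset.card_powersetCard i Finset.univ)))
        (by rw [Finset.card_univ]
            exact choose_le_choose_of_le_half (Nat.lt_succ_iff.1 (Finset.mem_range.1 hi)) ht)
      · rw [Finset.mem_powersetCard]
        exact ⟨Finset.subset_univ _, (Finset.mem_filter.1 hs).2⟩
    · rw [Finset.sum_const, Finset.card_range, smul_eq_mul]
  calc A.card ≤ B.card * (Fintype.card β - 1) ^ t := h3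
    _ ≤ ((t + 1) * (Fintype.card α).choose t) * (Fintype.card β - 1) ^ t :=
        Nat.mul_le_mul_right _ h4
    _ = (t + 1) * (Fintype.card α).choose t * (Fintype.card β - 1) ^ t := by ring

end Count

section UpperMain
open scoped Classical
variable {G : Type*} [AddCommGroup G] [Fintype G] {n b t : ℕ} [NeZero n]

set_option maxHeartbeats 1000000 in
lemma bset_card_upper (hbn : b ≤ n) (ht2 : 2 * t ≤ n) (hG : 2 ≤ Fintype.card G) (hb : 1 ≤ b) :
    (BSet n b t G).ncard ≤ (t + 1) * n.choose t * (Fintype.card G ^ b - 1) ^ t := by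
  set S : Finset (ZMod n → Fin b → G) :=
    Finset.univ.filter (fun F => (Finset.univ.filter (fun x => F x ≠ 0)).card ≤ t) with hS
  set f : (ZMod n → G) → (ZMod n → Fin b → G) := fun w =>
    if h : ∃ F : ZMod n → Fin b → G,
        ((Finset.univ.filter (fun p => F p ≠ 0)).card ≤ t ∧ decode F = w) then h.choose else 0
    with hf
  have hmem : ∀ w ∈ BSet n b t G, ∃ F : ZMod n → Fin b → G,
      ((Finset.univ.filter (fun p => F p ≠ 0)).card ≤ t ∧ decode F = w) := by
    rintro w ⟨i, hi, hw⟩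
    obtain ⟨F, hF1, hF2⟩ := exists_encoding hbn hw
    exact ⟨F, le_trans hF1 hi, hF2⟩
  have hdec : ∀ w ∈ BSet n b t G,
      ((Finset.univ.filter (fun p => (f w) p ≠ 0)).card ≤ t ∧ decode (f w) = w) := by
    intro w hw
    rw [hf]
    simp only [dif_pos (hmem w hw)]
    exact (hmem w hw).choose_spec
  have h1 : (BSet n b t G).ncard ≤ (S : Set (ZMod n → Fin b → G)).ncard := by
    apply Set.ncard_le_ncard_of_injOn f
    · intro w hw
      rw [hS, Finset.mem_coe, Finset.mem_filter]
      exact ⟨Finset.mem_univ _, (hdec w hw).1⟩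
    · intro w hw w' hw' hww'
      exact ((hdec w hw).2.symm.trans (congrArg decode hww')).trans (hdec w' hw').2
  rw [Set.ncard_coe_finset] at h1
  have hG2 : 2 ≤ Fintype.card (Fin b → G) := by
    rw [Fintype.card_fun, Fintype.card_fin]
    calc 2 = 2 ^ 1 := (pow_one 2).symm
      _ ≤ 2 ^ b := Nat.pow_le_pow_right (by omega) hb
      _ ≤ Fintype.card G ^ b := Nat.pow_le_pow_left hG b
  have key := card_bounded_support (α := ZMod n) (β := Fin b → G) t
    (by rw [ZMod.card]; exact ht2) hG2
  rw [ZMod.card, Fintype.card_fun, Fintype.card_fin] at key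
  refine le_trans h1 (le_of_eq_of_le ?_ key)
  simp only [hS]
  congr!

end UpperMain

section Lower
open scoped Classical
open Finset
variable {G : Type*} [AddCommGroup G] {n b t : ℕ} [NeZero n]

/-- the word built from start positions `P` and burst contents `c`. -/
noncomputable def lowW (P : Fin t → ℕ) (c : Fin t → Fin b → G) : ZMod n → G :=
  fun j => ∑ m, expand ((P m : ZMod n)) (c m) j

lemma npos : 0 < n := Nat.pos_of_ne_zero (NeZero.ne n)

lemma lowW_eval (hb : 1 ≤ b) {P : Fin t → ℕ} {c : Fin t → Fin b → G}
    (Hgap : ∀ m m' : Fin t, m < m' → P m + (2*b - 1) ≤ P m')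
    (Hrange : ∀ m, P m + (2*b - 1) ≤ n)
    (m : Fin t) (k : Fin b) :
    lowW P c (((P m : ℕ) : ZMod n) + ((k : ℕ) : ZMod n)) = c m k := by
  have hbn : b ≤ n := le_trans (by omega : b ≤ P m + (2*b-1)) (Hrange m)
  rw [lowW, Finset.sum_eq_single m]
  · exact expand_apply hbn _ _ _
  · intro m' _ hm'
    by_contra h0
    obtain ⟨k', hk', hj⟩ := expand_support _ _ _ h0
    have hcast : ((P m + (k:ℕ) : ℕ) : ZMod n) = ((P m' + k' : ℕ) : ZMod n) := by
      push_cast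
      exact hj
    have hk2 := k.2
    have hr1 := Hrange m
    have hr2 := Hrange m'
    have heq : P m + (k:ℕ) = P m' + k' :=
      natCast_zmod_inj npos (by omega) (by omega) hcast
    rcases lt_trichotomy m m' with h | h | h
    · have := Hgap m m' h; omega
    · exact hm' h.symm
    · have := Hgap m' m h; omega
  · intro hm; exact absurd (Finset.mem_univ m) hm

lemma lowW_eval_zero {P : Fin t → ℕ} {c : Fin t → Fin b → G} (j : ZMod n)
    (h : ∀ (m : Fin t) (k : ℕ), k < b → j ≠ ((P m : ℕ) : ZMod n) + (k : ZMod n)) :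
    lowW P c j = 0 :=
  Finset.sum_eq_zero fun m _ => by
    by_contra h0
    obtain ⟨k, hk, hj⟩ := expand_support _ _ _ h0
    exact h m k hk hj

lemma lowW_lookback (hb : 1 ≤ b) {P : Fin t → ℕ} {c : Fin t → Fin b → G}
    (Hgap : ∀ m m' : Fin t, m < m' → P m + (2*b - 1) ≤ P m')
    (Hrange : ∀ m, P m + (2*b - 1) ≤ n)
    (m : Fin t) (d : ℕ) (h1 : 1 ≤ d) (h2 : d < b) :
    lowW P c (((P m : ℕ) : ZMod n) - (d : ZMod n)) = 0 := by
  apply lowW_eval_zero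
  intro m' k' hk' hj
  have hj2 : ((P m : ℕ) : ZMod n) = ((P m' + k' + d : ℕ) : ZMod n) := by
    push_cast
    linear_combination hj
  have hr1 := Hrange m
  have hr2 := Hrange m'
  have heq : P m = P m' + k' + d :=
    natCast_zmod_inj npos (by omega) (by omega) hj2
  rcases lt_trichotomy m m' with h | h | h
  · have := Hgap m m' h; omega
  · subst h; omega
  · have := Hgap m' m h; omega

/-- start positions are recoverable from the word itself. -/
def StartSet (b : ℕ) (W : ZMod n → G) : Set (ZMod n) :=
  {j | W j ≠ 0 ∧ ∀ d : ℕ, 1 ≤ d → d < b → W (j - (d : ZMod n)) = 0}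

lemma lowW_eval_start (hb : 1 ≤ b) {P : Fin t → ℕ} {c : Fin t → Fin b → G}
    (Hgap : ∀ m m' : Fin t, m < m' → P m + (2*b - 1) ≤ P m')
    (Hrange : ∀ m, P m + (2*b - 1) ≤ n) (m : Fin t) :
    lowW P c ((P m : ℕ) : ZMod n) = c m ⟨0, hb⟩ := by
  have := lowW_eval hb Hgap Hrange (c := c) m ⟨0, hb⟩
  simpa using this

lemma startSet_lowW (hb : 1 ≤ b) {P : Fin t → ℕ} {c : Fin t → Fin b → G}
    (Hgap : ∀ m m' : Fin t, m < m' → P m + (2*b - 1) ≤ P m')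
    (Hrange : ∀ m, P m + (2*b - 1) ≤ n)
    (hc0 : ∀ m, c m ⟨0, hb⟩ ≠ 0) :
    StartSet b (lowW P c) = Set.range (fun m : Fin t => ((P m : ℕ) : ZMod n)) := by
  ext j
  constructor
  · rintro ⟨hne, hlook⟩
    have hex : ¬ ∀ (m : Fin t) (k : ℕ), k < b → j ≠ ((P m : ℕ) : ZMod n) + (k : ZMod n) :=
      fun h => hne (lowW_eval_zero j h)
    push_neg at hex
    obtain ⟨m, k, hk, hj⟩ := hex
    rcases Nat.eq_zero_or_pos k with rfl | hkpos
    · exact ⟨m, by simpa using hj.symm⟩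
    · exfalso
      apply hc0 m
      have heq : lowW P c (j - (k : ZMod n)) = c m ⟨0, hb⟩ := by
        rw [hj]
        have : (((P m : ℕ) : ZMod n) + (k : ZMod n)) - (k : ZMod n) = ((P m : ℕ) : ZMod n) := by
          ring
        rw [this]
        exact lowW_eval_start hb Hgap Hrange m
      exact heq.symm.trans (hlook k hkpos hk)
  · rintro ⟨m, rfl⟩
    refine ⟨?_, fun d h1 h2 => lowW_lookback hb Hgap Hrange m d h1 h2⟩
    rw [lowW_eval_start hb Hgap Hrange m]
    exact hc0 m

lemma lowW_inj (hb : 1 ≤ b) {P P' : Fin t → ℕ} {c c' : Fin t → Fin b → G}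
    (Hgap : ∀ m m' : Fin t, m < m' → P m + (2*b - 1) ≤ P m')
    (Hrange : ∀ m, P m + (2*b - 1) ≤ n)
    (Hgap' : ∀ m m' : Fin t, m < m' → P' m + (2*b - 1) ≤ P' m')
    (Hrange' : ∀ m, P' m + (2*b - 1) ≤ n)
    (hc0 : ∀ m, c m ⟨0, hb⟩ ≠ 0) (hc0' : ∀ m, c' m ⟨0, hb⟩ ≠ 0)
    (hW : lowW (n := n) P c = lowW P' c') : P = P' ∧ c = c' := by
  have hstart : Set.range (fun m : Fin t => ((P m : ℕ) : ZMod n))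
      = Set.range (fun m : Fin t => ((P' m : ℕ) : ZMod n)) := by
    rw [← startSet_lowW hb Hgap Hrange hc0, ← startSet_lowW hb Hgap' Hrange' hc0', hW]
  have hval : ∀ m : Fin t, (((P m : ℕ) : ZMod n)).val = P m := by
    intro m
    exact ZMod.val_natCast_of_lt (by have := Hrange m; omega)
  have hval' : ∀ m : Fin t, (((P' m : ℕ) : ZMod n)).val = P' m := by
    intro m
    exact ZMod.val_natCast_of_lt (by have := Hrange' m; omega)
  have hrangeP : Set.range P = Set.range P' := by
    have : ZMod.val '' Set.range (fun m : Fin t => ((P m : ℕ) : ZMod n))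
        = ZMod.val '' Set.range (fun m : Fin t => ((P' m : ℕ) : ZMod n)) := by rw [hstart]
    rw [← Set.range_comp, ← Set.range_comp] at this
    convert this using 2 <;> funext m
    · exact (hval m).symm
    · exact (hval' m).symm
  have hPmono : StrictMono P := fun m m' h => by have := Hgap m m' h; omega
  have hPmono' : StrictMono P' := fun m m' h => by have := Hgap' m m' h; omega
  have hPP : P = P' := (StrictMono.range_inj hPmono hPmono').1 hrangeP
  refine ⟨hPP, ?_⟩
  funext m k
  have h1 := lowW_eval hb Hgap Hrange (c := c) m k
  have h2 := lowW_eval hb Hgap' Hrange' (c := c') m k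
  rw [← h1, ← h2, hW, hPP]

end Lower

section LowerMain
open scoped Classical
open Finset
variable {G : Type*} [AddCommGroup G] [Fintype G] {n b t : ℕ} [NeZero n]

lemma card_first_nonzero {H : Type*} [Fintype H] [AddCommGroup H] (b : ℕ) (hb : 1 ≤ b) :
    Fintype.card {v : Fin b → H // v ⟨0, hb⟩ ≠ 0}
      = Fintype.card H ^ b - Fintype.card H ^ (b - 1) := by
  obtain ⟨b', rfl⟩ : ∃ b', b = b' + 1 := ⟨b - 1, by omega⟩
  have h0 : (⟨0, hb⟩ : Fin (b'+1)) = 0 := rfl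
  rw [h0]
  have e : {v : Fin (b'+1) → H // v 0 = 0} ≃ ({k : Fin (b'+1) // k ≠ 0} → H) :=
    { toFun := fun v k => v.1 k.1
      invFun := fun u => ⟨fun k => if h : k = 0 then 0 else u ⟨k, h⟩, by simp⟩
      left_inv := by
        rintro ⟨v, hv⟩
        ext k
        by_cases h : k = 0 <;> simp [h, hv]
      right_inv := by
        intro u; funext k; simp [k.2] }
  have hne : Fintype.card {k : Fin (b'+1) // k ≠ 0} = b' := by
    rw [Fintype.card_subtype_compl, Fintype.card_subtype_eq, Fintype.card_fin]; omega
  have hzero : Fintype.card {v : Fin (b'+1) → H // v 0 = 0} = Fintype.card H ^ b' := by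
    rw [Fintype.card_congr e, Fintype.card_fun, hne]
  rw [Fintype.card_subtype_compl, hzero, Fintype.card_fun, Fintype.card_fin]
  congr 1

lemma strictMono_fin_growth {t N : ℕ} {f : Fin t → Fin N} (hf : StrictMono f) :
    ∀ d : ℕ, ∀ m m' : Fin t, (m' : ℕ) = (m : ℕ) + d → (f m : ℕ) + d ≤ (f m' : ℕ) := by
  intro d
  induction d with
  | zero =>
    intro m m' h
    have : m' = m := Fin.ext (by omega)
    subst this; omega
  | succ d ih =>
    intro m m' h
    have hm'' : (m:ℕ) + d < t := by have := m'.2; omega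
    have h3 := ih m ⟨(m:ℕ)+d, hm''⟩ rfl
    have h2 : f ⟨(m:ℕ)+d, hm''⟩ < f m' := hf (by rw [Fin.lt_def]; simp; omega)
    have h4 := Fin.lt_def.1 h2
    omega

lemma cycInt_cast_disjoint (hb : 1 ≤ b) {P : Fin t → ℕ}
    (Hgap : ∀ m m' : Fin t, m < m' → P m + (2*b-1) ≤ P m')
    (Hrange : ∀ m, P m + (2*b-1) ≤ n)
    {m m' : Fin t} (hmm : m ≠ m') :
    cycInt n ((P m : ZMod n)) b ∩ cycInt n ((P m' : ZMod n)) b = ∅ := by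
  ext j
  simp only [Set.mem_inter_iff, Set.mem_empty_iff_false, iff_false, not_and]
  rintro ⟨k, hk, rfl⟩ ⟨k', hk', hj⟩
  have hcast : ((P m + k : ℕ) : ZMod n) = ((P m' + k' : ℕ) : ZMod n) := by
    push_cast
    exact hj
  have hr1 := Hrange m
  have hr2 := Hrange m'
  have heq : P m + k = P m' + k' :=
    natCast_zmod_inj npos (by omega) (by omega) hcast
  rcases lt_trichotomy m m' with h | h | h
  · have := Hgap m m' h; omega
  · exact hmm h
  · have := Hgap m' m h; omega

lemma bset_card_lower (hb : 1 ≤ b) (ht : 1 ≤ t) (hn : 2*b*t ≤ n) :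
    (n - (2*b-2)*t).choose t * (Fintype.card G ^ b - Fintype.card G ^ (b-1)) ^ t
      ≤ (BSet n b t G).ncard := by
  set N := n - (2*b-2)*t with hNdef
  have e1 : (2*b-2+2)*t = (2*b-2)*t + 2*t := Nat.add_mul _ _ _
  have e2 : 2*b-2+2 = 2*b := by omega
  rw [e2] at e1
  have hNn : N + (2*b-2)*t = n := by omega
  have h2tN : 2*t ≤ N := by omega
  let S := {s : Finset (Fin N) // s.card = t}
  let V := {v : Fin b → G // v ⟨0, hb⟩ ≠ 0}
  let Pof : S → Fin t → ℕ :=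
    fun s m => ((s.1.orderEmbOfFin s.2 m : Fin N) : ℕ) + (2*b-2) * (m:ℕ)
  have HgapOf : ∀ s : S, ∀ m m' : Fin t, m < m' → Pof s m + (2*b-1) ≤ Pof s m' := by
    intro s m m' h
    have hgrow := strictMono_fin_growth (s.1.orderEmbOfFin s.2).strictMono
      ((m':ℕ) - (m:ℕ)) m m' (by have := Fin.lt_def.1 h; omega)
    have hmul : (2*b-2) * (m':ℕ) = (2*b-2)*(m:ℕ) + (2*b-2)*((m':ℕ)-(m:ℕ)) := by
      rw [← Nat.mul_add]
      congr 1
      have := Fin.lt_def.1 h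
      omega
    have hmul2 : 2*b-2 ≤ (2*b-2)*((m':ℕ)-(m:ℕ)) :=
      Nat.le_mul_of_pos_right _ (by have := Fin.lt_def.1 h; omega)
    have := Fin.lt_def.1 h
    simp only [Pof]
    omega
  have HrangeOf : ∀ (s : S) (m : Fin t), Pof s m + (2*b-1) ≤ n := by
    intro s m
    have h1 : ((s.1.orderEmbOfFin s.2 m : Fin N) : ℕ) < N := (s.1.orderEmbOfFin s.2 m).2
    have h2 : (2*b-2)*(m:ℕ) ≤ (2*b-2)*(t-1) :=
      Nat.mul_le_mul_left _ (by have := m.2; omega)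
    have h3 : (2*b-2)*t = (2*b-2)*(t-1) + (2*b-2) := by
      rw [← Nat.mul_succ]
      congr 1
      omega
    simp only [Pof]
    omega
  let Φ : S × (Fin t → V) → (ZMod n → G) :=
    fun d => lowW (Pof d.1) (fun m => (d.2 m).1)
  have hΦmem : ∀ d, Φ d ∈ BSet n b t G := by
    intro d
    refine ⟨t, le_refl t, ?_⟩
    refine ⟨fun m => expand ((Pof d.1 m : ZMod n)) (d.2 m).1,
      fun m => ((Pof d.1 m : ℕ) : ZMod n), fun _ => b, fun m => burstAt_expand _ _,
      fun m m' hmm => cycInt_cast_disjoint hb (HgapOf d.1) (HrangeOf d.1) hmm, ?_⟩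
    funext j
    rw [Finset.sum_apply]
    rfl
  have hΦinj : Function.Injective Φ := by
    rintro ⟨s, c⟩ ⟨s', c'⟩ hW
    obtain ⟨hP, hc⟩ := lowW_inj hb (HgapOf s) (HrangeOf s) (HgapOf s') (HrangeOf s')
      (fun m => (c m).2) (fun m => (c' m).2) hW
    have hemb : ∀ m, s.1.orderEmbOfFin s.2 m = s'.1.orderEmbOfFin s'.2 m := by
      intro m
      have := congrFun hP m
      simp only [Pof] at this
      exact Fin.ext (by omega)
    have hss : s = s' := by
      apply Subtype.ext
      apply Finset.coe_injective
      have hfun : (fun m => s.1.orderEmbOfFin s.2 m) = (fun m => s'.1.orderEmbOfFin s'.2 m) :=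
        funext hemb
      rw [← Finset.range_orderEmbOfFin s.1 s.2, ← Finset.range_orderEmbOfFin s'.1 s'.2]
      show Set.range (fun m => s.1.orderEmbOfFin s.2 m)
        = Set.range (fun m => s'.1.orderEmbOfFin s'.2 m)
      rw [hfun]
    have hcc : c = c' := by
      funext m
      apply Subtype.ext
      exact congrFun hc m
    rw [Prod.ext_iff]
    exact ⟨hss, hcc⟩
  have hcard : Nat.card (S × (Fin t → V))
      = N.choose t * (Fintype.card G ^ b - Fintype.card G ^ (b-1)) ^ t := by
    rw [Nat.card_eq_fintype_card, Fintype.card_prod, Fintype.card_fun,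
      card_first_nonzero b hb, Fintype.card_fin]
    congr 2
    rw [Fintype.card_finset_len, Fintype.card_fin]
  calc N.choose t * (Fintype.card G ^ b - Fintype.card G ^ (b-1)) ^ t
      = Nat.card (S × (Fin t → V)) := hcard.symm
    _ = Nat.card (Set.range Φ) := (Nat.card_range_of_injective hΦinj).symm
    _ = (Set.range Φ).ncard := Nat.card_coe_set_eq _
    _ ≤ (BSet n b t G).ncard :=
        Set.ncard_le_ncard (Set.range_subset_iff.2 hΦmem) (Set.toFinite _)

end LowerMain



/-- for all n ≥ 2bt,
(1−1/q)^t (q^b−1)^t C(n−(2b−2)t, t) ≤ |B_{≤t,≤b}| ≤ (t+1)(q^b−1)^t C(n, t). -/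
theorem bset_size_bounds {G : Type*} [AddCommGroup G] [Fintype G] (q t b : ℕ)
    (hq : Fintype.card G = q) (hq2 : 2 ≤ q) (hb : 1 ≤ b) (ht : 1 ≤ t) :
    ∀ n : ℕ, 2 * b * t ≤ n →
      (1 - 1 / (q : ℝ)) ^ t * ((q : ℝ) ^ b - 1) ^ t * (Nat.choose (n - (2 * b - 2) * t) t : ℝ)
          ≤ ((BSet n b t G).ncard : ℝ) ∧
      ((BSet n b t G).ncard : ℝ) ≤ (t + 1) * ((q : ℝ) ^ b - 1) ^ t * (Nat.choose n t : ℝ) := by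
  intro n hn
  have hbt2 : 2 * 1 * 1 ≤ 2 * b * t := Nat.mul_le_mul (Nat.mul_le_mul_left 2 hb) ht
  haveI : NeZero n := ⟨by omega⟩
  have hbn : b ≤ n := by
    have h1 : b * (2 * 1) ≤ b * (2 * t) := Nat.mul_le_mul_left b (by omega)
    have h2 : b * (2 * t) = 2 * b * t := by ring
    omega
  have ht2n : 2 * t ≤ n := by
    have h1 : (2 * t) * 1 ≤ (2 * t) * b := Nat.mul_le_mul_left (2*t) hb
    have h2 : (2 * t) * b = 2 * b * t := by ring
    omega
  have hcardG : 2 ≤ Fintype.card G := by rw [hq]; exact hq2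
  have hqR : (1:ℝ) ≤ (q:ℝ) := by exact_mod_cast (by omega : 1 ≤ q)
  have hqpos : (0:ℝ) < q := by linarith
  constructor
  · -- lower bound
    have hl := bset_card_lower (G := G) hb ht hn
    rw [hq] at hl
    have hcast : ((Nat.choose (n - (2*b-2)*t) t * (q ^ b - q ^ (b-1)) ^ t : ℕ) : ℝ)
        = (Nat.choose (n - (2*b-2)*t) t : ℝ) * ((q:ℝ) ^ b - (q:ℝ) ^ (b-1)) ^ t := by
      rw [Nat.cast_mul, Nat.cast_pow, Nat.cast_sub
        (Nat.pow_le_pow_right (by omega : 1 ≤ q) (by omega : b - 1 ≤ b))]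
      push_cast
      ring
    have hlR : (Nat.choose (n - (2*b-2)*t) t : ℝ) * ((q:ℝ) ^ b - (q:ℝ) ^ (b-1)) ^ t
        ≤ ((BSet n b t G).ncard : ℝ) := by
      rw [← hcast]
      exact Nat.cast_le.2 hl
    refine le_trans ?_ hlR
    rw [mul_comm (Nat.choose (n - (2*b-2)*t) t : ℝ) _]
    apply mul_le_mul_of_nonneg_right ?_ (Nat.cast_nonneg _)
    rw [← mul_pow]
    apply pow_le_pow_left₀
    · apply mul_nonneg
      · have : 1 / (q:ℝ) ≤ 1 := by
          rw [div_le_one hqpos]; exact hqR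
        linarith
      · have : (1:ℝ) ≤ (q:ℝ)^b := one_le_pow₀ hqR
        linarith
    · have hbb : (q:ℝ)^b = (q:ℝ)^(b-1) * q := by
        rw [← pow_succ]
        congr 1
        omega
      have hA : (1:ℝ) ≤ (q:ℝ)^(b-1) := one_le_pow₀ hqR
      rw [hbb]
      have hexp : (1 - 1/(q:ℝ)) * ((q:ℝ)^(b-1) * q - 1)
          = (q:ℝ)^(b-1) * q - (q:ℝ)^(b-1) - (1 - 1/(q:ℝ)) := by
        field_simp
      have h1q : 1 / (q:ℝ) ≤ 1 := by rw [div_le_one hqpos]; exact hqR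
      rw [hexp]
      linarith
  · -- upper bound
    have hu := bset_card_upper (G := G) (t := t) hbn ht2n hcardG hb
    rw [hq] at hu
    have hcast : (((t + 1) * Nat.choose n t * (q ^ b - 1) ^ t : ℕ) : ℝ)
        = ((t:ℝ) + 1) * (Nat.choose n t : ℝ) * ((q:ℝ) ^ b - 1) ^ t := by
      rw [Nat.cast_mul, Nat.cast_pow, Nat.cast_sub (Nat.one_le_pow _ _ (by omega : 0 < q))]
      push_cast
      ring
    calc ((BSet n b t G).ncard : ℝ)
        ≤ (((t + 1) * Nat.choose n t * (q ^ b - 1) ^ t : ℕ) : ℝ) := Nat.cast_le.2 hu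
      _ = ((t:ℝ) + 1) * (Nat.choose n t : ℝ) * ((q:ℝ) ^ b - 1) ^ t := hcast
      _ = (t + 1) * ((q : ℝ) ^ b - 1) ^ t * (Nat.choose n t : ℝ) := by ring
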